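/- Let r ∈ ℂ and define the Green's form [f₁,f₂]_r = (∂_z f₁ + (r/(z - z̄)) f₁) f₂ dz + f₁ (∂_{z̄} f₂) dz̄ for f₁, f₂ ∈ C^∞(U), U ⊂ ℍ open. If f₁ is r-harmonic on U (Δ_r f₁ = 0) and f₂ satisfies 4y² ∂_z ∂_{z̄} f₂ + 2iry ∂_{z̄} f₂ + r f₂ = 0 on U, then the 1-form [f₁, f₂]_r is closed on U. -/

import Mathlib

noncomputable def wderivBar (F : ℂ → ℂ) (z : ℂ) : ℂ :=
  (fderiv ℝ F z 1 + Complex.I * fderiv ℝ F z Complex.I) / 2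

noncomputable def wderiv (F : ℂ → ℂ) (z : ℂ) : ℂ :=
  (fderiv ℝ F z 1 - Complex.I * fderiv ℝ F z Complex.I) / 2

noncomputable def hlaplacian (r : ℂ) (F : ℂ → ℂ) (z : ℂ) : ℂ :=
  -4 * (z.im : ℂ) ^ 2 * wderiv (fun w => wderivBar F w) z +
    2 * Complex.I * r * (z.im : ℂ) * wderivBar F z

/- ### Auxiliary lemmas -/

lemma wderivBar_mul {F G : ℂ → ℂ} {z : ℂ} (hF : DifferentiableAt ℝ F z)
    (hG : DifferentiableAt ℝ G z) :
    wderivBar (fun w => F w * G w) z = wderivBar F z * G z + F z * wderivBar G z := by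
  unfold wderivBar
  rw [fderiv_fun_mul hF hG]
  simp [smul_eq_mul]
  ring

lemma wderiv_mul {F G : ℂ → ℂ} {z : ℂ} (hF : DifferentiableAt ℝ F z)
    (hG : DifferentiableAt ℝ G z) :
    wderiv (fun w => F w * G w) z = wderiv F z * G z + F z * wderiv G z := by
  unfold wderiv
  rw [fderiv_fun_mul hF hG]
  simp [smul_eq_mul]
  ring

lemma wderivBar_add {F G : ℂ → ℂ} {z : ℂ} (hF : DifferentiableAt ℝ F z)
    (hG : DifferentiableAt ℝ G z) :
    wderivBar (fun w => F w + G w) z = wderivBar F z + wderivBar G z := by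
  unfold wderivBar
  rw [fderiv_fun_add hF hG]
  simp
  ring

lemma fderiv_apply_one {F : ℂ → ℂ} {z : ℂ} (hd : DifferentiableAt ℝ (fderiv ℝ F) z) (v : ℂ) :
    fderiv ℝ (fun w => fderiv ℝ F w v) z = (fderiv ℝ (fderiv ℝ F) z).flip v := by
  rw [fderiv_clm_apply hd (differentiableAt_const _)]
  simp

lemma fderiv_wderivBar_apply {F : ℂ → ℂ} {z : ℂ} (hd : DifferentiableAt ℝ (fderiv ℝ F) z)
    (u : ℂ) :
    fderiv ℝ (fun w => wderivBar F w) z u =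
      (fderiv ℝ (fderiv ℝ F) z u 1 + Complex.I * fderiv ℝ (fderiv ℝ F) z u Complex.I) / 2 := by
  have h1 : DifferentiableAt ℝ (fun w => fderiv ℝ F w 1) z :=
    hd.clm_apply (differentiableAt_const _)
  have hI : DifferentiableAt ℝ (fun w => fderiv ℝ F w Complex.I) z :=
    hd.clm_apply (differentiableAt_const _)
  have e : (fun w => wderivBar F w)
      = fun w => (fderiv ℝ F w 1 + Complex.I * fderiv ℝ F w Complex.I) * (2:ℂ)⁻¹ := by
    funext w; simp [wderivBar, div_eq_mul_inv]
  rw [e, fderiv_mul_const (h1.fun_add (hI.const_mul _)), fderiv_fun_add h1 (hI.const_mul _),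
    fderiv_const_mul hI, fderiv_apply_one hd, fderiv_apply_one hd]
  simp [smul_eq_mul, div_eq_mul_inv]
  ring

lemma fderiv_wderiv_apply {F : ℂ → ℂ} {z : ℂ} (hd : DifferentiableAt ℝ (fderiv ℝ F) z)
    (u : ℂ) :
    fderiv ℝ (fun w => wderiv F w) z u =
      (fderiv ℝ (fderiv ℝ F) z u 1 - Complex.I * fderiv ℝ (fderiv ℝ F) z u Complex.I) / 2 := by
  have h1 : DifferentiableAt ℝ (fun w => fderiv ℝ F w 1) z :=
    hd.clm_apply (differentiableAt_const _)
  have hI : DifferentiableAt ℝ (fun w => fderiv ℝ F w Complex.I) z :=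
    hd.clm_apply (differentiableAt_const _)
  have e : (fun w => wderiv F w)
      = fun w => (fderiv ℝ F w 1 - Complex.I * fderiv ℝ F w Complex.I) * (2:ℂ)⁻¹ := by
    funext w; simp [wderiv, div_eq_mul_inv]
  rw [e, fderiv_mul_const (h1.fun_sub (hI.const_mul _)), fderiv_fun_sub h1 (hI.const_mul _),
    fderiv_const_mul hI, fderiv_apply_one hd, fderiv_apply_one hd]
  simp [smul_eq_mul, div_eq_mul_inv]
  ring

lemma wderiv_differentiable {F : ℂ → ℂ} {z : ℂ} (hd : DifferentiableAt ℝ (fderiv ℝ F) z) :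
    DifferentiableAt ℝ (fun w => wderiv F w) z := by
  have h1 := hd.clm_apply (differentiableAt_const (1:ℂ))
  have hI := hd.clm_apply (differentiableAt_const Complex.I)
  have h : DifferentiableAt ℝ
      (fun w => (fderiv ℝ F w 1 - Complex.I * fderiv ℝ F w Complex.I) / 2) z := by
    simp only [div_eq_mul_inv]
    exact (h1.sub (hI.const_mul Complex.I)).mul_const _
  exact h

lemma wderivBar_differentiable {F : ℂ → ℂ} {z : ℂ} (hd : DifferentiableAt ℝ (fderiv ℝ F) z) :
    DifferentiableAt ℝ (fun w => wderivBar F w) z := by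
  have h1 := hd.clm_apply (differentiableAt_const (1:ℂ))
  have hI := hd.clm_apply (differentiableAt_const Complex.I)
  have h : DifferentiableAt ℝ
      (fun w => (fderiv ℝ F w 1 + Complex.I * fderiv ℝ F w Complex.I) / 2) z := by
    simp only [div_eq_mul_inv]
    exact (h1.add (hI.const_mul Complex.I)).mul_const _
  exact h

lemma wderiv_wderivBar_comm {F : ℂ → ℂ} {z : ℂ} (hF : ContDiffAt ℝ 2 F z) :
    wderivBar (fun w => wderiv F w) z = wderiv (fun w => wderivBar F w) z := by
  have hd : DifferentiableAt ℝ (fderiv ℝ F) z :=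
    (hF.fderiv_right (m := 1) (by norm_num)).differentiableAt one_ne_zero
  have hs := hF.isSymmSndFDerivAt (by simp [minSmoothness_of_isRCLikeNormedField]) 1 Complex.I
  have A : wderivBar (fun w => wderiv F w) z =
      (fderiv ℝ (fun w => wderiv F w) z 1 +
        Complex.I * fderiv ℝ (fun w => wderiv F w) z Complex.I) / 2 := rfl
  have B : wderiv (fun w => wderivBar F w) z =
      (fderiv ℝ (fun w => wderivBar F w) z 1 -
        Complex.I * fderiv ℝ (fun w => wderivBar F w) z Complex.I) / 2 := rfl
  rw [A, B, fderiv_wderiv_apply hd, fderiv_wderiv_apply hd, fderiv_wderivBar_apply hd,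
    fderiv_wderivBar_apply hd, hs]
  ring

lemma sub_conj_ne {z : ℂ} (hy : z.im ≠ 0) : z - starRingEnd ℂ z ≠ 0 := by
  rw [Complex.sub_conj]
  simp [Complex.ext_iff, hy]

lemma phi_hasFDerivAt (z : ℂ) :
    HasFDerivAt (fun w : ℂ => w - starRingEnd ℂ w)
      (ContinuousLinearMap.id ℝ ℂ - (Complex.conjCLE : ℂ →L[ℝ] ℂ)) z := by
  have h := (hasFDerivAt_id z).sub (Complex.conjCLE.toContinuousLinearMap.hasFDerivAt (x := z))
  exact h.congr_of_eventuallyEq (Filter.Eventually.of_forall fun w => by simp [Complex.conjCLE_apply])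

lemma g_hasFDerivAt {z : ℂ} (hy : z.im ≠ 0) (r : ℂ) :
    HasFDerivAt (fun w => r / (w - starRingEnd ℂ w))
      (r • ((-ContinuousLinearMap.mulLeftRight ℝ ℂ (z - starRingEnd ℂ z)⁻¹
        (z - starRingEnd ℂ z)⁻¹).comp
        (ContinuousLinearMap.id ℝ ℂ - (Complex.conjCLE : ℂ →L[ℝ] ℂ)))) z := by
  have hne := sub_conj_ne hy
  have h := ((hasFDerivAt_inv' (𝕜 := ℝ) hne).comp z (phi_hasFDerivAt z)).const_mul r
  simpa [div_eq_mul_inv] using h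

lemma g_differentiable {z : ℂ} (hy : z.im ≠ 0) (r : ℂ) :
    DifferentiableAt ℝ (fun w => r / (w - starRingEnd ℂ w)) z :=
  (g_hasFDerivAt hy r).differentiableAt

lemma wderivBar_g {z : ℂ} (hy : z.im ≠ 0) (r : ℂ) :
    wderivBar (fun w => r / (w - starRingEnd ℂ w)) z = r / (z - starRingEnd ℂ z) ^ 2 := by
  have hne := sub_conj_ne hy
  unfold wderivBar
  rw [(g_hasFDerivAt hy r).fderiv]
  simp [ContinuousLinearMap.mulLeftRight_apply, Complex.conjCLE_apply, smul_eq_mul,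
    Complex.conj_I]
  field_simp
  linear_combination (-2*r) * Complex.I_sq

/-- if `f₁` is `r`-harmonic and `f₂` satisfies
`4y² ∂_z ∂_z̄ f₂ + 2iry ∂_z̄ f₂ + r f₂ = 0` on `U ⊆ ℍ`, then the Green's form
`[f₁,f₂]_r = (∂_z f₁ + (r/(z-z̄)) f₁) f₂ dz + f₁ (∂_z̄ f₂) dz̄` is closed on `U`,
i.e. `∂_z̄ ((∂_z f₁ + (r/(z-z̄)) f₁) f₂) = ∂_z (f₁ ∂_z̄ f₂)` on `U`. -/
theorem greens_form_closed (r : ℂ) (U : Set ℂ) (hU : IsOpen U)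
    (hUH : U ⊆ {z : ℂ | 0 < z.im})
    (f₁ f₂ : ℂ → ℂ)
    (h1 : ContDiffOn ℝ (⊤ : ℕ∞) f₁ U) (h2 : ContDiffOn ℝ (⊤ : ℕ∞) f₂ U)
    (hf1 : ∀ z ∈ U, hlaplacian r f₁ z = 0)
    (hf2 : ∀ z ∈ U,
        4 * (z.im : ℂ) ^ 2 * wderiv (fun w => wderivBar f₂ w) z +
            2 * Complex.I * r * (z.im : ℂ) * wderivBar f₂ z + r * f₂ z = 0) :
    ∀ z ∈ U,
      wderivBar (fun w => (wderiv f₁ w + r / (w - starRingEnd ℂ w) * f₁ w) * f₂ w) z =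
        wderiv (fun w => f₁ w * wderivBar f₂ w) z := by
  intro z hz
  have hyz : 0 < z.im := hUH hz
  have hy : z.im ≠ 0 := ne_of_gt hyz
  have hnhds : U ∈ nhds z := hU.mem_nhds hz
  have cd1 : ContDiffAt ℝ 2 f₁ z := (h1.contDiffAt hnhds).of_le (ENat.natCast_le_of_coe_top_le_withTop le_rfl 2)
  have cd2 : ContDiffAt ℝ 2 f₂ z := (h2.contDiffAt hnhds).of_le (ENat.natCast_le_of_coe_top_le_withTop le_rfl 2)
  have d1 : DifferentiableAt ℝ f₁ z := cd1.differentiableAt (by norm_num)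
  have dd1 : DifferentiableAt ℝ (fderiv ℝ f₁) z :=
    (cd1.fderiv_right (m := 1) (by norm_num)).differentiableAt one_ne_zero
  have dd2 : DifferentiableAt ℝ (fderiv ℝ f₂) z :=
    (cd2.fderiv_right (m := 1) (by norm_num)).differentiableAt one_ne_zero
  have d2 : DifferentiableAt ℝ f₂ z := cd2.differentiableAt (by norm_num)
  have dwd1 : DifferentiableAt ℝ (fun w => wderiv f₁ w) z := wderiv_differentiable dd1
  have dwb2 : DifferentiableAt ℝ (fun w => wderivBar f₂ w) z := wderivBar_differentiable dd2
  have dg : DifferentiableAt ℝ (fun w => r / (w - starRingEnd ℂ w)) z := g_differentiable hy r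
  rw [wderivBar_mul (dwd1.fun_add (dg.fun_mul d1)) d2, wderivBar_add dwd1 (dg.fun_mul d1),
    wderivBar_mul dg d1, wderiv_mul d1 dwb2, wderiv_wderivBar_comm cd1, wderivBar_g hy r]
  have h1' := hf1 z hz
  have h2' := hf2 z hz
  unfold hlaplacian at h1'
  rw [Complex.sub_conj]
  push_cast
  set y := (z.im : ℂ)
  have hy' : y ≠ 0 := Complex.ofReal_ne_zero.mpr hy
  set c := wderiv (fun w => wderivBar f₁ w) z
  set b := wderivBar f₁ z
  set a := wderiv f₁ z
  set m := f₁ z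
  set p := f₂ z
  set q := wderivBar f₂ z
  set s := wderiv (fun w => wderivBar f₂ w) z
  have h2y : (2:ℂ) * y * Complex.I ≠ 0 := by simp [hy']
  have h4y : (4:ℂ) * y ^ 2 ≠ 0 := by simp [hy']
  have key2 : r / (2 * y * Complex.I) ^ 2 = -r / (4 * y ^ 2) := by
    rw [div_eq_div_iff (pow_ne_zero 2 h2y) h4y]
    linear_combination (4 * y ^ 2 * r) * Complex.I_sq
  have key1 : r / (2 * y * Complex.I) = -(Complex.I * r) / (2 * y) := by
    rw [div_eq_div_iff h2y (by simp [hy'] : (2:ℂ) * y ≠ 0)]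
    linear_combination (2 * y * r) * Complex.I_sq
  rw [key1, key2]
  field_simp
  linear_combination (-2*p) * h1' + (-2*m) * h2'
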